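/- Let τ be a critical binary Galton–Watson tree (μ_2(0) = μ_2(2) = 1/2). For all p ∈ ℕ and s ∈ (0,1), E[s^{#τ} | S(τ) = p] = 2^{p+1}·sinh(a(s))/sinh(2^{p+1}·a(s)), where a(s) > 0 is determined by cosh(a(s)) = 1/s. -/

import Mathlib

open MeasureTheory

/-- Finite rooted plane trees. -/
inductive PTree : Type where
  | node : List PTree → PTree

namespace PTree

/-- Number of vertices. -/
def size : PTree → ℕ
  | node ts => 1 + (ts.attach.map (fun s => size s.1)).sum
decreasing_by simp_wf; have := List.sizeOf_lt_of_mem s.2; (try simp only [List.cons.sizeOf_spec, PTree.node.sizeOf_spec] at this ⊢); omega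

/-- The Horton–Strahler number. -/
def hs : PTree → ℕ
  | node ts =>
    let vals := ts.attach.map (fun s => hs s.1)
    vals.foldr max 0 + (if 2 ≤ vals.count (vals.foldr max 0) then 1 else 0)
decreasing_by simp_wf; have := List.sizeOf_lt_of_mem s.2; (try simp only [List.cons.sizeOf_spec, PTree.node.sizeOf_spec] at this ⊢); omega

end PTree

/-- `PTree` is a countable type; we equip it with the discrete σ-algebra. -/
instance : MeasurableSpace PTree := ⊤

open scoped ENNReal

lemma pt_size_leaf : (PTree.node []).size = 1 := by simp [PTree.size]
lemma pt_hs_leaf : (PTree.node []).hs = 0 := by simp [PTree.hs]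
lemma pt_size_pair (x y : PTree) : (PTree.node [x,y]).size = 1 + x.size + y.size := by
  simp [PTree.size]; ring
lemma pt_hs_pair (x y : PTree) : (PTree.node [x,y]).hs
    = max x.hs y.hs + (if x.hs = y.hs then 1 else 0) := by
  rw [PTree.hs]
  simp only [List.attach, List.attachWith, List.map, List.pmap, List.foldr, List.count, List.countP,
    List.countP.go]
  rcases Nat.lt_trichotomy x.hs y.hs with h|h|h
  · simp [Nat.max_eq_right h.le, Nat.max_eq_right (Nat.zero_le _), h.ne, Nat.ne_of_lt h,
      beq_eq_false_iff_ne.mpr h.ne]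
  · simp [h]
  · simp [Nat.max_eq_left h.le, Nat.max_eq_left (Nat.zero_le _), h.ne', Nat.ne_of_lt h,
      (Nat.ne_of_lt h).symm, beq_eq_false_iff_ne.mpr h.ne]

lemma pt_hs_pair_ne_zero (x y : PTree) : (PTree.node [x,y]).hs ≠ 0 := by
  rw [pt_hs_pair, Nat.max_def]; split_ifs <;> omega

lemma pt_hs_pair_eq_succ (x y : PTree) (p : ℕ) : (PTree.node [x,y]).hs = p+1 ↔
    (x.hs = p+1 ∧ y.hs ≤ p) ∨ (x.hs ≤ p ∧ y.hs = p+1) ∨ (x.hs = p ∧ y.hs = p) := by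
  rw [pt_hs_pair, Nat.max_def]; split_ifs <;> omega

lemma pt_meas {s : Set PTree} : MeasurableSet s := MeasurableSpace.measurableSet_top
lemma pt_meas_fun {α} [MeasurableSpace α] (f : PTree → α) : Measurable f :=
  fun _ _ => MeasurableSpace.measurableSet_top

section rec
variable (P : Measure PTree) [IsProbabilityMeasure P]
  (hbranch : ∀ f : PTree → ENNReal,
      ∫⁻ t, f t ∂P
        = (1/2) * f (.node [])
          + (1/2) * ∫⁻ q : PTree × PTree, f (.node [q.1, q.2]) ∂(P.prod P))
  (v : PTree → ℝ≥0∞) (c : ℝ≥0∞)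
  (hv : ∀ x y : PTree, v (.node [x,y]) = c * (v x * v y))

include hv in
/-- indicator splitting -/
lemma ind_split (p : ℕ) (x y : PTree) :
    Set.indicator {t : PTree | t.hs = p+1} v (.node [x,y]) =
      c * (Set.indicator {t : PTree | t.hs = p+1} v x * Set.indicator {t : PTree | t.hs ≤ p} v y
        + Set.indicator {t : PTree | t.hs ≤ p} v x * Set.indicator {t : PTree | t.hs = p+1} v y
        + Set.indicator {t : PTree | t.hs = p} v x * Set.indicator {t : PTree | t.hs = p} v y) := by
  simp only [Set.indicator_apply, Set.mem_setOf_eq, pt_hs_pair_eq_succ]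
  split_ifs <;> first
    | omega
    | simp [hv x y]
    | (rw [hv x y]; ring)

include hbranch hv in
lemma Fv_succ (p : ℕ) :
    ∫⁻ t in {t : PTree | t.hs = p+1}, v t ∂P
      = 2⁻¹ * (c * ((∫⁻ t in {t : PTree | t.hs = p+1}, v t ∂P) * (∫⁻ t in {t : PTree | t.hs ≤ p}, v t ∂P)
          + (∫⁻ t in {t : PTree | t.hs ≤ p}, v t ∂P) * (∫⁻ t in {t : PTree | t.hs = p+1}, v t ∂P)
          + (∫⁻ t in {t : PTree | t.hs = p}, v t ∂P) * (∫⁻ t in {t : PTree | t.hs = p}, v t ∂P))) := by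
  have hmeasv : ∀ (A : Set PTree), Measurable (A.indicator v) := fun A => pt_meas_fun _
  have hm : ∀ A B : Set PTree,
      Measurable (fun q : PTree × PTree => A.indicator v q.1 * B.indicator v q.2) :=
    fun A B => Measurable.mul (Measurable.comp (hmeasv A) measurable_fst)
      (Measurable.comp (hmeasv B) measurable_snd)
  have key : ∀ A : Set PTree, ∫⁻ t in A, v t ∂P = ∫⁻ t, A.indicator v t ∂P :=
    fun A => (lintegral_indicator pt_meas v).symm
  have hleaf : Set.indicator {t : PTree | t.hs = p+1} v (.node []) = 0 := by
    simp [Set.indicator_apply, pt_hs_leaf]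
  have hpt : ∀ q : PTree × PTree,
      Set.indicator {t : PTree | t.hs = p+1} v (.node [q.1, q.2]) =
      c * (Set.indicator {t : PTree | t.hs = p+1} v q.1 * Set.indicator {t : PTree | t.hs ≤ p} v q.2
        + Set.indicator {t : PTree | t.hs ≤ p} v q.1 * Set.indicator {t : PTree | t.hs = p+1} v q.2
        + Set.indicator {t : PTree | t.hs = p} v q.1 * Set.indicator {t : PTree | t.hs = p} v q.2) :=
    fun q => ind_split v c hv p q.1 q.2
  have hprod : ∫⁻ q : PTree × PTree,
        Set.indicator {t : PTree | t.hs = p+1} v (.node [q.1, q.2]) ∂(P.prod P)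
      = c * ((∫⁻ t, Set.indicator {t : PTree | t.hs = p+1} v t ∂P) * (∫⁻ t, Set.indicator {t : PTree | t.hs ≤ p} v t ∂P)
        + (∫⁻ t, Set.indicator {t : PTree | t.hs ≤ p} v t ∂P) * (∫⁻ t, Set.indicator {t : PTree | t.hs = p+1} v t ∂P)
        + (∫⁻ t, Set.indicator {t : PTree | t.hs = p} v t ∂P) * (∫⁻ t, Set.indicator {t : PTree | t.hs = p} v t ∂P)) := by
    rw [lintegral_congr hpt,
      lintegral_const_mul c,
      lintegral_add_right _ (hm _ _), lintegral_add_right _ (hm _ _),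
      lintegral_prod_mul (hmeasv _).aemeasurable (hmeasv _).aemeasurable,
      lintegral_prod_mul (hmeasv _).aemeasurable (hmeasv _).aemeasurable,
      lintegral_prod_mul (hmeasv _).aemeasurable (hmeasv _).aemeasurable]
    exact ((hm _ _).add (hm _ _)).add (hm _ _)
  rw [key, key, key]
  conv_lhs => rw [hbranch (Set.indicator {t : PTree | t.hs = p+1} v)]
  rw [hleaf, mul_zero, zero_add, hprod, one_div]

include hbranch in
lemma Fv_zero :
    ∫⁻ t in {t : PTree | t.hs = 0}, v t ∂P = 2⁻¹ * v (.node []) := by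
  rw [(lintegral_indicator pt_meas v).symm, hbranch (Set.indicator {t : PTree | t.hs = 0} v)]
  have h1 : Set.indicator {t : PTree | t.hs = 0} v (.node []) = v (.node []) := by
    simp [Set.indicator_apply, pt_hs_leaf]
  have h2 : ∀ q : PTree × PTree, Set.indicator {t : PTree | t.hs = 0} v (.node [q.1,q.2]) = 0 := by
    intro q; simp [Set.indicator_apply, pt_hs_pair_ne_zero]
  rw [h1, lintegral_congr h2, lintegral_zero, mul_zero, add_zero, one_div]

lemma Gv_zero : ∫⁻ t in {t : PTree | t.hs ≤ 0}, v t ∂P = ∫⁻ t in {t : PTree | t.hs = 0}, v t ∂P := by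
  congr 1; ext t; simp [Nat.le_zero]

lemma Gv_succ (p : ℕ) :
    ∫⁻ t in {t : PTree | t.hs ≤ p+1}, v t ∂P
      = ∫⁻ t in {t : PTree | t.hs ≤ p}, v t ∂P + ∫⁻ t in {t : PTree | t.hs = p+1}, v t ∂P := by
  have hset : {t : PTree | t.hs ≤ p+1} = {t : PTree | t.hs ≤ p} ∪ {t : PTree | t.hs = p+1} := by
    ext t; simp only [Set.mem_setOf_eq, Set.mem_union]; omega
  rw [hset, lintegral_union pt_meas (by
    rw [Set.disjoint_left]; intro t h1 h2
    simp only [Set.mem_setOf_eq] at h1 h2; omega)]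

end rec

lemma setLintegral_le_one (P : Measure PTree) [IsProbabilityMeasure P]
    (A : Set PTree) (v : PTree → ℝ≥0∞) (hv : ∀ t, v t ≤ 1) :
    ∫⁻ t in A, v t ∂P ≤ 1 := by
  calc ∫⁻ t in A, v t ∂P ≤ ∫⁻ _ in A, 1 ∂P := lintegral_mono (fun t => hv t)
  _ = P A := setLIntegral_one A
  _ ≤ 1 := prob_le_one

lemma h2inv : (2:ℝ≥0∞)⁻¹ = ENNReal.ofReal 2⁻¹ := by
  rw [ENNReal.ofReal_inv_of_pos (by norm_num)]
  norm_num

lemma ofReal_comb (s g f x : ℝ) (hs : 0 ≤ s) (hg : 0 ≤ g) (hf : 0 ≤ f) (hx : 0 ≤ x) :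
    (2:ℝ≥0∞)⁻¹ * (ENNReal.ofReal s * (ENNReal.ofReal x * ENNReal.ofReal g
      + ENNReal.ofReal g * ENNReal.ofReal x + ENNReal.ofReal f * ENNReal.ofReal f))
    = ENNReal.ofReal (2⁻¹ * (s * (x * g + g * x + f * f))) := by
  rw [← ENNReal.ofReal_mul hx, ← ENNReal.ofReal_mul hg, ← ENNReal.ofReal_mul hf,
    ← ENNReal.ofReal_add (mul_nonneg hx hg) (mul_nonneg hg hx),
    ← ENNReal.ofReal_add (by positivity) (mul_nonneg hf hf),
    ← ENNReal.ofReal_mul hs, h2inv, ← ENNReal.ofReal_mul (by norm_num)]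

lemma real_base (s a : ℝ) (hs : 0 < s) (ha : 0 < a) (hcosh : Real.cosh a = 1/s) :
    Real.sinh a / Real.sinh (2*a) = s/2 := by
  have h1 : Real.sinh a ≠ 0 := (Real.sinh_pos_iff.mpr ha).ne'
  have h2 : Real.cosh a ≠ 0 := (Real.cosh_pos a).ne'
  rw [Real.sinh_two_mul, hcosh]
  field_simp

lemma real_step (s a X x : ℝ) (hs : 0 < s) (ha : 0 < a) (hX : a < X)
    (hcosh : Real.cosh a = 1/s)
    (heq : x = 2⁻¹ * (s * (x * (Real.sinh (X - a)/Real.sinh X)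
      + (Real.sinh (X - a)/Real.sinh X) * x
      + (Real.sinh a/Real.sinh X) * (Real.sinh a/Real.sinh X)))) :
    x = Real.sinh a / Real.sinh (2*X) := by
  have hX0 : 0 < X := ha.trans hX
  have hshX : 0 < Real.sinh X := Real.sinh_pos_iff.mpr hX0
  have hsha : 0 < Real.sinh a := Real.sinh_pos_iff.mpr ha
  have hchX : 0 < Real.cosh X := Real.cosh_pos X
  have hcha : 0 < Real.cosh a := Real.cosh_pos a
  have hsc : s * Real.cosh a = 1 := by rw [hcosh]; field_simp
  have hsub : Real.sinh (X - a) = Real.sinh X * Real.cosh a - Real.cosh X * Real.sinh a :=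
    Real.sinh_sub X a
  have h2X : Real.sinh (2*X) = 2 * Real.sinh X * Real.cosh X := Real.sinh_two_mul X
  rw [hsub] at heq
  field_simp at heq
  have heq' : x * (2 * Real.sinh X * Real.sinh X)
      = s * (2 * x * (Real.sinh X * Real.cosh a - Real.cosh X * Real.sinh a) * Real.sinh X
        + Real.sinh a * Real.sinh a) := by
    apply mul_right_cancel₀ hshX.ne'
    linear_combination Real.sinh X * heq
  have hgoal : x * (2 * Real.sinh X * Real.cosh X) * (s * Real.sinh a)
      = Real.sinh a * (s * Real.sinh a) := by
    linear_combination heq' + (2 * x * Real.sinh X^2) * hsc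
  have := mul_right_cancel₀ (by positivity : (s * Real.sinh a) ≠ 0) hgoal
  rw [h2X, eq_div_iff (by positivity)]
  linarith [this]

lemma real_gstep (a X : ℝ) (ha : 0 < a) (hX : a < X) :
    Real.sinh (X - a)/Real.sinh X + Real.sinh a / Real.sinh (2*X)
      = Real.sinh (2*X - a) / Real.sinh (2*X) := by
  have hX0 : 0 < X := ha.trans hX
  have hshX : 0 < Real.sinh X := Real.sinh_pos_iff.mpr hX0
  have hchX : 0 < Real.cosh X := Real.cosh_pos X
  have h2X : Real.sinh (2*X) = 2 * Real.sinh X * Real.cosh X := Real.sinh_two_mul X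
  rw [Real.sinh_sub, Real.sinh_sub, h2X, Real.cosh_two_mul]
  rw [div_add_div _ _ hshX.ne' (mul_pos (mul_pos two_pos hshX) hchX).ne',
    div_eq_div_iff (mul_pos hshX (mul_pos (mul_pos two_pos hshX) hchX)).ne'
      (mul_pos (mul_pos two_pos hshX) hchX).ne']
  linear_combination (-(2*Real.sinh X^2*Real.cosh X*Real.sinh a)) * (Real.cosh_sq_sub_sinh_sq X)

lemma real_qstep (u y : ℝ) (hu : 0 < u)
    (heq : y = 2⁻¹ * (1 * (y * (1-u) + (1-u) * y + u * u))) : y = u/2 := by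
  have h : y * u = (u/2) * u := by nlinarith [heq]
  exact mul_right_cancel₀ hu.ne' h

/-- Let `τ` be a critical binary Galton–Watson tree (each vertex
independently has `0` or `2` children with probability `1/2` each, expressed by the branching
identity `hbranch`). For all `p ∈ ℕ` and `s ∈ (0,1)`,
`E[s^{#τ} | S(τ) = p] = 2^{p+1}·sinh(a(s))/sinh(2^{p+1}·a(s))` where `a(s) > 0` is
determined by `cosh(a(s)) = 1/s`; the conditional expectation is written multiplied through
by `P(S(τ) = p)`. -/
theorem stmt_17 (P : Measure PTree) [IsProbabilityMeasure P]
    (hbranch : ∀ f : PTree → ENNReal,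
      ∫⁻ t, f t ∂P
        = (1/2) * f (.node [])
          + (1/2) * ∫⁻ q : PTree × PTree, f (.node [q.1, q.2]) ∂(P.prod P))
    (p : ℕ) (s a : ℝ) (hs₀ : 0 < s) (hs₁ : s < 1) (ha : 0 < a)
    (hcosh : Real.cosh a = 1/s) :
    ∫⁻ t in {t : PTree | t.hs = p}, ENNReal.ofReal (s ^ t.size) ∂P
      = ENNReal.ofReal ((2:ℝ) ^ (p+1) * Real.sinh a / Real.sinh ((2:ℝ) ^ (p+1) * a))
        * P {t : PTree | t.hs = p} := by
  set u : PTree → ℝ≥0∞ := fun t => ENNReal.ofReal (s ^ t.size) with hu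
  have hvu : ∀ x y : PTree, u (.node [x,y]) = ENNReal.ofReal s * (u x * u y) := by
    intro x y
    simp only [hu, pt_size_pair]
    rw [pow_add, pow_add, pow_one, ENNReal.ofReal_mul (by positivity),
      ENNReal.ofReal_mul hs₀.le, mul_assoc]
  have hv1 : ∀ x y : PTree, (fun _ : PTree => (1:ℝ≥0∞)) (.node [x,y])
      = ENNReal.ofReal 1 * ((1:ℝ≥0∞) * 1) := by
    intro x y; simp
  have hule : ∀ t : PTree, u t ≤ 1 :=
    fun t => ENNReal.ofReal_le_one.mpr (pow_le_one₀ hs₀.le hs₁.le)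
  have h1le : ∀ t : PTree, (fun _ : PTree => (1:ℝ≥0∞)) t ≤ 1 := fun _ => le_rfl
  -- positivity facts
  have hXpos : ∀ q : ℕ, 0 < (2:ℝ)^(q+1) * a := by
    intro q; positivity
  have haX : ∀ q : ℕ, a < (2:ℝ)^(q+1) * a := by
    intro q
    have h2p : (2:ℝ) ≤ 2^(q+1) := by
      calc (2:ℝ) = 2^1 := (pow_one 2).symm
      _ ≤ 2^(q+1) := pow_le_pow_right₀ (by norm_num) (by omega)
    nlinarith
  have hsinhX : ∀ q : ℕ, 0 < Real.sinh ((2:ℝ)^(q+1) * a) :=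
    fun q => Real.sinh_pos_iff.mpr (hXpos q)
  have hsinha : 0 < Real.sinh a := Real.sinh_pos_iff.mpr ha
  have hsinhXa : ∀ q : ℕ, 0 < Real.sinh ((2:ℝ)^(q+1) * a - a) :=
    fun q => Real.sinh_pos_iff.mpr (by linarith [haX q])
  have hupos : ∀ q : ℕ, (0:ℝ) < ((2:ℝ)^(q+1))⁻¹ := by intro q; positivity
  have hule1 : ∀ q : ℕ, ((2:ℝ)^(q+1))⁻¹ ≤ 1 := by
    intro q
    rw [inv_le_one_iff₀]
    right
    calc (1:ℝ) ≤ 2^1 := by norm_num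
    _ ≤ 2^(q+1) := pow_le_pow_right₀ (by norm_num) (by omega)
  have hXX : ∀ q : ℕ, (2:ℝ)^(q+1+1) * a = 2 * ((2:ℝ)^(q+1) * a) := by
    intro q; ring
  -- the main induction
  have main : ∀ q : ℕ,
      (∫⁻ t in {t : PTree | t.hs = q}, u t ∂P)
          = ENNReal.ofReal (Real.sinh a / Real.sinh ((2:ℝ)^(q+1) * a))
      ∧ (∫⁻ t in {t : PTree | t.hs ≤ q}, u t ∂P)
          = ENNReal.ofReal (Real.sinh ((2:ℝ)^(q+1) * a - a) / Real.sinh ((2:ℝ)^(q+1) * a))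
      ∧ (∫⁻ t in {t : PTree | t.hs = q}, (1:ℝ≥0∞) ∂P) = ENNReal.ofReal ((2:ℝ)^(q+1))⁻¹
      ∧ (∫⁻ t in {t : PTree | t.hs ≤ q}, (1:ℝ≥0∞) ∂P)
          = ENNReal.ofReal (1 - ((2:ℝ)^(q+1))⁻¹) := by
    intro q
    induction q with
    | zero =>
      have hb : Real.sinh a / Real.sinh ((2:ℝ)^(0+1) * a) = s/2 := by
        rw [pow_one]; exact real_base s a hs₀ ha hcosh
      have hF : ∫⁻ t in {t : PTree | t.hs = 0}, u t ∂P = ENNReal.ofReal (s/2) := by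
        rw [Fv_zero P hbranch u]
        simp only [hu, pt_size_leaf, pow_one]
        rw [h2inv, ← ENNReal.ofReal_mul (by norm_num)]
        congr 1; ring
      refine ⟨?_, ?_, ?_, ?_⟩
      · rw [hF, hb]
      · rw [Gv_zero P u, hF]
        have : Real.sinh ((2:ℝ)^(0+1) * a - a) / Real.sinh ((2:ℝ)^(0+1) * a) = s/2 := by
          rw [pow_one, show (2:ℝ)*a - a = a by ring, ← hb, pow_one]
        rw [this]
      · rw [Fv_zero P hbranch (fun _ => 1), mul_one, h2inv]
        norm_num
      · rw [Gv_zero P (fun _ => 1), Fv_zero P hbranch (fun _ => 1), mul_one, h2inv]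
        norm_num
    | succ q ih =>
      obtain ⟨ihF, ihG, ihQ, ihQle⟩ := ih
      -- abbreviations
      set X : ℝ := (2:ℝ)^(q+1) * a with hXdef
      have hfinF : (∫⁻ t in {t : PTree | t.hs = q+1}, u t ∂P) ≠ ⊤ :=
        ((setLintegral_le_one P _ u hule).trans_lt ENNReal.one_lt_top).ne
      have hfinQ : (∫⁻ t in {t : PTree | t.hs = q+1}, (1:ℝ≥0∞) ∂P) ≠ ⊤ :=
        ((setLintegral_le_one P _ _ h1le).trans_lt ENNReal.one_lt_top).ne
      set x : ℝ := (∫⁻ t in {t : PTree | t.hs = q+1}, u t ∂P).toReal with hxdef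
      set y : ℝ := (∫⁻ t in {t : PTree | t.hs = q+1}, (1:ℝ≥0∞) ∂P).toReal with hydef
      have hx0 : 0 ≤ x := ENNReal.toReal_nonneg
      have hy0 : 0 ≤ y := ENNReal.toReal_nonneg
      have hxof : ∫⁻ t in {t : PTree | t.hs = q+1}, u t ∂P = ENNReal.ofReal x :=
        (ENNReal.ofReal_toReal hfinF).symm
      have hyof : ∫⁻ t in {t : PTree | t.hs = q+1}, (1:ℝ≥0∞) ∂P = ENNReal.ofReal y :=
        (ENNReal.ofReal_toReal hfinQ).symm
      have hg0 : 0 ≤ Real.sinh (X - a)/Real.sinh X :=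
        div_nonneg (hsinhXa q).le (hsinhX q).le
      have hf0 : 0 ≤ Real.sinh a/Real.sinh X := div_nonneg hsinha.le (hsinhX q).le
      have hsum0 : 0 ≤ 2⁻¹ * (s * (x * (Real.sinh (X - a)/Real.sinh X)
          + (Real.sinh (X - a)/Real.sinh X) * x
          + (Real.sinh a/Real.sinh X) * (Real.sinh a/Real.sinh X))) := by
        apply mul_nonneg (by norm_num)
        apply mul_nonneg hs₀.le
        exact add_nonneg (add_nonneg (mul_nonneg hx0 hg0) (mul_nonneg hg0 hx0))
          (mul_nonneg hf0 hf0)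
      -- F recursion
      have hrecF := Fv_succ P hbranch u (ENNReal.ofReal s) hvu q
      rw [hxof, ihF, ihG, ofReal_comb s _ _ x hs₀.le hg0 hf0 hx0] at hrecF
      have hxeq : x = 2⁻¹ * (s * (x * (Real.sinh (X - a)/Real.sinh X)
          + (Real.sinh (X - a)/Real.sinh X) * x
          + (Real.sinh a/Real.sinh X) * (Real.sinh a/Real.sinh X))) := by
        have := (ENNReal.ofReal_eq_ofReal_iff hx0 hsum0).mp hrecF
        linarith [this]
      have hxval : x = Real.sinh a / Real.sinh (2*X) :=
        real_step s a X x hs₀ ha (haX q) hcosh hxeq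
      -- Q recursion
      have hrecQ := Fv_succ P hbranch (fun _ => 1) (ENNReal.ofReal 1) hv1 q
      rw [hyof, ihQ, ihQle, ofReal_comb 1 _ _ y (by norm_num)
        (by linarith [hule1 q]) (hupos q).le hy0] at hrecQ
      have hqle0 : (0:ℝ) ≤ 1 - ((2:ℝ)^(q+1))⁻¹ := by linarith [hule1 q]
      have hysum0 : 0 ≤ 2⁻¹ * (1 * (y * (1 - ((2:ℝ)^(q+1))⁻¹)
          + (1 - ((2:ℝ)^(q+1))⁻¹) * y + ((2:ℝ)^(q+1))⁻¹ * ((2:ℝ)^(q+1))⁻¹)) := by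
        apply mul_nonneg (by norm_num)
        rw [one_mul]
        exact add_nonneg (add_nonneg (mul_nonneg hy0 hqle0) (mul_nonneg hqle0 hy0))
          (mul_nonneg (hupos q).le (hupos q).le)
      have hyeq : y = 2⁻¹ * (1 * (y * (1 - ((2:ℝ)^(q+1))⁻¹)
          + (1 - ((2:ℝ)^(q+1))⁻¹) * y + ((2:ℝ)^(q+1))⁻¹ * ((2:ℝ)^(q+1))⁻¹)) := by
        have := (ENNReal.ofReal_eq_ofReal_iff hy0 hysum0).mp hrecQ
        linarith [this]
      have hyval : y = ((2:ℝ)^(q+1))⁻¹ / 2 := real_qstep _ y (hupos q) hyeq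
      have hyval2 : y = ((2:ℝ)^(q+1+1))⁻¹ := by
        rw [hyval, pow_succ]
        field_simp
        ring
      refine ⟨?_, ?_, ?_, ?_⟩
      · rw [hxof, hxval, hXX q]
      · rw [Gv_succ P u q, ihG, hxof, hxval,
          ← ENNReal.ofReal_add (by positivity) (by positivity), hXX q]
        congr 1
        rw [← real_gstep a X ha (haX q)]
      · rw [hyof, hyval2]
      · rw [Gv_succ P (fun _ => 1) q, ihQle, hyof, hyval2,
          ← ENNReal.ofReal_add (by linarith [hule1 q]) (by positivity)]
        congr 1
        have : ((2:ℝ)^(q+1+1))⁻¹ = ((2:ℝ)^(q+1))⁻¹/2 := by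
          rw [pow_succ]; field_simp
        rw [this]
        ring
  obtain ⟨h1, -, h3, -⟩ := main p
  have hP : P {t : PTree | t.hs = p} = ENNReal.ofReal ((2:ℝ)^(p+1))⁻¹ := by
    rw [← setLIntegral_one, h3]
  rw [h1, hP, ← ENNReal.ofReal_mul (by positivity)]
  congr 1
  field_simp
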